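/- Let α be a multiplier on the finite group G and (π,V,α) a projective representation. Let {f_i}_{i=1}^{(dim V)²} be a basis of the vector space of linear maps V → V. Then π is irreducible if and only if for every i there is a scalar c_i ∈ ℂ with ⟨f_i⟩_π = c_i • 1_V. -/

import Mathlib

/-- Given a basis `{f_i}` of `End(V)`, `π` is irreducible iff each
`⟨f_i⟩_π` is a scalar multiple of the identity. -/
theorem stmt_16 {G : Type*} [Group G] [Fintype G]
    {V : Type*} [AddCommGroup V] [Module ℂ V] [FiniteDimensional ℂ V]
    (α : G → G → ℂˣ)
    (hα : ∀ x y z : G, α x y * α (x * y) z = α x (y * z) * α y z)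
    (hα1 : ∀ x : G, α x 1 = 1 ∧ α 1 x = 1)
    (π : G → (Module.End ℂ V)ˣ)
    (hπ1 : π 1 = 1)
    (hπ : ∀ x y : G, (π x : Module.End ℂ V) * (π y : Module.End ℂ V)
        = (α x y : ℂ) • (π (x * y) : Module.End ℂ V))
    (f : Fin ((Module.finrank ℂ V) ^ 2) → Module.End ℂ V)
    (hf : ∃ b : Module.Basis (Fin ((Module.finrank ℂ V) ^ 2)) ℂ (Module.End ℂ V), ⇑b = f)
    (avg : Module.End ℂ V → Module.End ℂ V)
    (havg : ∀ T : Module.End ℂ V, avg T = (Fintype.card G : ℂ)⁻¹ •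
        ∑ g : G, (((π g)⁻¹ : (Module.End ℂ V)ˣ) : Module.End ℂ V) * T *
          (π g : Module.End ℂ V)) :
    (∀ W : Submodule ℂ V,
        (∀ g : G, ∀ v ∈ W, (π g : Module.End ℂ V) v ∈ W) → W = ⊥ ∨ W = ⊤)
      ↔ (∀ i : Fin ((Module.finrank ℂ V) ^ 2),
          ∃ c : ℂ, avg (f i) = c • (1 : Module.End ℂ V)) := by
  classical
  obtain ⟨b, hb⟩ := hf
  have hcard : (Fintype.card G : ℂ) ≠ 0 := Nat.cast_ne_zero.2 Fintype.card_ne_zero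
  -- key identity: π h * (π (g*h))⁻¹ = α g h • (π g)⁻¹
  have key1 : ∀ g h : G, (π h : Module.End ℂ V) * (((π (g*h))⁻¹ : (Module.End ℂ V)ˣ) : Module.End ℂ V)
      = (α g h : ℂ) • (((π g)⁻¹ : (Module.End ℂ V)ˣ) : Module.End ℂ V) := by
    intro g h
    calc (π h : Module.End ℂ V) * ↑(π (g*h))⁻¹
        = ↑(π g)⁻¹ * ((π g : Module.End ℂ V) * ((π h : Module.End ℂ V) * ↑(π (g*h))⁻¹)) := by
          rw [← mul_assoc, Units.inv_mul, one_mul]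
      _ = ↑(π g)⁻¹ * ((α g h : ℂ) • (1 : Module.End ℂ V)) := by
          congr 1
          rw [← mul_assoc, hπ g h, smul_mul_assoc, Units.mul_inv]
      _ = (α g h : ℂ) • ↑(π g)⁻¹ := by
          rw [mul_smul_comm, mul_one]
  -- avg T commutes with every π h
  have hcomm : ∀ (T : Module.End ℂ V) (h : G),
      avg T * (π h : Module.End ℂ V) = (π h : Module.End ℂ V) * avg T := by
    intro T h
    rw [havg T, smul_mul_assoc, mul_smul_comm]
    congr 1
    rw [Finset.sum_mul, Finset.mul_sum]
    rw [← Fintype.sum_equiv (Equiv.mulRight h)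
      (fun g => (π h : Module.End ℂ V) * (↑(π ((Equiv.mulRight h) g))⁻¹ * T * (π ((Equiv.mulRight h) g) : Module.End ℂ V)))
      (fun g => (π h : Module.End ℂ V) * (↑(π g)⁻¹ * T * (π g : Module.End ℂ V)))
      (fun g => rfl)]
    apply Finset.sum_congr rfl
    intro g _
    simp only [Equiv.coe_mulRight]
    calc ↑(π g)⁻¹ * T * (π g : Module.End ℂ V) * (π h : Module.End ℂ V)
        = ↑(π g)⁻¹ * T * ((α g h : ℂ) • (π (g*h) : Module.End ℂ V)) := by
          rw [mul_assoc, hπ g h]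
      _ = (α g h : ℂ) • (↑(π g)⁻¹ * T * (π (g*h) : Module.End ℂ V)) := by
          rw [mul_smul_comm]
      _ = ((α g h : ℂ) • ↑(π g)⁻¹) * T * (π (g*h) : Module.End ℂ V) := by
          rw [smul_mul_assoc, smul_mul_assoc]
      _ = ((π h : Module.End ℂ V) * ↑(π (g*h))⁻¹) * T * (π (g*h) : Module.End ℂ V) := by
          rw [key1 g h]
      _ = (π h : Module.End ℂ V) * (↑(π (g*h))⁻¹ * T * (π (g*h) : Module.End ℂ V)) := by
          rw [mul_assoc, mul_assoc, mul_assoc]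
  -- (π g)⁻¹ expressed via π g⁻¹
  have hinvW : ∀ (W : Submodule ℂ V),
      (∀ g : G, ∀ v ∈ W, (π g : Module.End ℂ V) v ∈ W) →
      ∀ g : G, ∀ v ∈ W, (↑(π g)⁻¹ : Module.End ℂ V) v ∈ W := by
    intro W hW g v hv
    have h1 : (π g : Module.End ℂ V) * (π g⁻¹ : Module.End ℂ V)
        = (α g g⁻¹ : ℂ) • (1 : Module.End ℂ V) := by
      rw [hπ g g⁻¹, mul_inv_cancel, hπ1, Units.val_one]
    have hα0 : (α g g⁻¹ : ℂ) ≠ 0 := Units.ne_zero _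
    have h2 : (↑(π g)⁻¹ : Module.End ℂ V) = ((α g g⁻¹ : ℂ))⁻¹ • (π g⁻¹ : Module.End ℂ V) := by
      calc (↑(π g)⁻¹ : Module.End ℂ V)
          = ((α g g⁻¹ : ℂ))⁻¹ • (↑(π g)⁻¹ * ((π g : Module.End ℂ V) * (π g⁻¹ : Module.End ℂ V))) := by
            rw [h1, mul_smul_comm, mul_one, smul_smul, inv_mul_cancel₀ hα0, one_smul]
        _ = ((α g g⁻¹ : ℂ))⁻¹ • (π g⁻¹ : Module.End ℂ V) := by
            rw [← mul_assoc, Units.inv_mul, one_mul]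
    rw [h2]
    simp only [LinearMap.smul_apply]
    exact W.smul_mem _ (hW g⁻¹ v hv)
  constructor
  · -- irreducible ⇒ scalars
    intro hirr i
    by_cases hV : Nontrivial V
    · set A := avg (f i) with hA
      obtain ⟨c, hc⟩ := Module.End.exists_eigenvalue A
      refine ⟨c, ?_⟩
      have hEig := hirr (Module.End.eigenspace A c) ?_
      · rcases hEig with h | h
        · exact absurd h hc
        · ext v
          have hv : v ∈ Module.End.eigenspace A c := h ▸ Submodule.mem_top
          rw [Module.End.mem_eigenspace_iff] at hv
          simpa using hv
      · intro g v hv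
        rw [Module.End.mem_eigenspace_iff] at hv ⊢
        have := congrArg (fun T : Module.End ℂ V => T v) (hcomm (f i) g)
        simp only [Module.End.mul_apply] at this
        rw [← hA] at this
        rw [this, hv, map_smul]
    · rw [not_nontrivial_iff_subsingleton] at hV
      exact ⟨0, Subsingleton.elim _ _⟩
  · -- scalars ⇒ irreducible
    intro hsc
    -- avg as a linear map
    let L : Module.End ℂ V →ₗ[ℂ] Module.End ℂ V :=
      (Fintype.card G : ℂ)⁻¹ • (∑ g : G,
        (LinearMap.mulLeft ℂ (↑(π g)⁻¹ : Module.End ℂ V)) ∘ₗ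
          (LinearMap.mulRight ℂ (π g : Module.End ℂ V)))
    have hL : ∀ T, avg T = L T := by
      intro T
      rw [havg T]
      simp only [L, LinearMap.smul_apply, LinearMap.sum_apply, LinearMap.comp_apply,
        LinearMap.mulLeft_apply, LinearMap.mulRight_apply, mul_assoc]
    have hscal : ∀ T : Module.End ℂ V, ∃ c : ℂ, avg T = c • (1 : Module.End ℂ V) := by
      intro T
      choose c hc using hsc
      refine ⟨∑ i, b.repr T i * c i, ?_⟩
      have hLb : ∀ i, L (b i) = c i • (1 : Module.End ℂ V) := by
        intro i
        rw [← hL, hb]; exact hc i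
      rw [hL]
      conv_lhs => rw [← b.sum_repr T]
      rw [map_sum]
      rw [Finset.sum_congr rfl (fun i _ => by rw [map_smul, hLb i, smul_smul])]
      rw [← Finset.sum_smul]
    intro W hW
    rcases eq_or_ne W ⊥ with h | hWne
    · exact Or.inl h
    right
    obtain ⟨q, hq⟩ := Submodule.exists_isCompl W
    set T : Module.End ℂ V := W.subtype ∘ₗ (W.projectionOnto q hq) with hT
    have hT1 : ∀ v ∈ W, T v = v := by
      intro v hv
      simpa [hT] using congrArg Subtype.val (Submodule.projectionOnto_apply_left hq ⟨v, hv⟩)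
    have hT2 : ∀ v, T v ∈ W := fun v => (W.projectionOnto q hq v).2
    obtain ⟨c, hc⟩ := hscal T
    obtain ⟨w, hwW, hw0⟩ := Submodule.exists_mem_ne_zero_of_ne_bot hWne
    -- avg T fixes w
    have hfix : avg T w = w := by
      rw [havg]
      have : ∀ g : G, (↑(π g)⁻¹ * T * (π g : Module.End ℂ V)) w = w := by
        intro g
        simp only [Module.End.mul_apply]
        rw [hT1 _ (hW g w hwW), ← Module.End.mul_apply, Units.inv_mul, Module.End.one_apply]
      simp only [LinearMap.smul_apply, LinearMap.sum_apply, this, Finset.sum_const,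
        Finset.card_univ, ← Nat.cast_smul_eq_nsmul ℂ, smul_smul]
      rw [inv_mul_cancel₀ hcard, one_smul]
    have hc1 : c = 1 := by
      have : c • w = w := by
        have := congrArg (fun S : Module.End ℂ V => S w) hc
        simp only [LinearMap.smul_apply, Module.End.one_apply] at this
        rw [← this, hfix]
      have h2 : (c - 1) • w = 0 := by rw [sub_smul, one_smul, this, sub_self]
      rcases smul_eq_zero.mp h2 with h | h
      · exact sub_eq_zero.mp h
      · exact absurd h hw0
    -- range of avg T is in W
    have hrange : ∀ v : V, avg T v ∈ W := by
      intro v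
      rw [havg]
      simp only [LinearMap.smul_apply, LinearMap.sum_apply]
      apply W.smul_mem
      apply Submodule.sum_mem
      intro g _
      simp only [Module.End.mul_apply]
      exact hinvW W hW g _ (hT2 _)
    -- conclude W = ⊤
    rw [eq_top_iff]
    intro v _
    have : avg T v = v := by
      rw [hc, hc1, one_smul]; rfl
    rw [← this]
    exact hrange v
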